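/- Let J : ℝ⁴ → ℝ⁴ be the map J(x₁,x₂,y₁,y₂) = (y₁,y₂,x₁,x₂), let γ₁, γ₂ : ℝ → ℝ⁴ be differentiable curves with J∘γ₁ = γ₁, and set g(x,y) = x•γ₁(y) + γ₂(y) and f(x,y,z) = cosh z • J(g(x,y)) − sinh z • g(x,y). Then for all (x,y,z), det[f_x, f_y, f_z, f] = det[γ₁(y), γ₂'(y), γ₂(y), J(γ₂(y))]. In particular, if det[γ₁, γ₂', γ₂, Jγ₂] never vanishes then f is a centro-affine immersion (its position vector is transversal to the span of its partial derivatives). -/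

import Mathlib

noncomputable section

/-- The canonical para-complex structure on `ℝ⁴`. -/
def Jpc : (Fin 4 → ℝ) → (Fin 4 → ℝ) := fun v => ![v 2, v 3, v 0, v 1]

/-- Determinant of the `4 × 4` matrix whose columns are `w₁, w₂, w₃, w₄`. -/
def det4 (w₁ w₂ w₃ w₄ : Fin 4 → ℝ) : ℝ :=
  (Matrix.of fun i j => ![w₁, w₂, w₃, w₄] j i).det

set_option maxHeartbeats 1600000 in
private lemma det4_eq (w1 w2 w3 w4 : Fin 4 → ℝ) : det4 w1 w2 w3 w4 =
      w1 0*w2 1*w3 2*w4 3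
      - w1 0*w2 1*w4 2*w3 3
      - w1 0*w3 1*w2 2*w4 3
      + w1 0*w3 1*w4 2*w2 3
      + w1 0*w4 1*w2 2*w3 3
      - w1 0*w4 1*w3 2*w2 3
      - w2 0*w1 1*w3 2*w4 3
      + w2 0*w1 1*w4 2*w3 3
      + w2 0*w3 1*w1 2*w4 3
      - w2 0*w3 1*w4 2*w1 3
      - w2 0*w4 1*w1 2*w3 3
      + w2 0*w4 1*w3 2*w1 3
      + w3 0*w1 1*w2 2*w4 3
      - w3 0*w1 1*w4 2*w2 3
      - w3 0*w2 1*w1 2*w4 3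
      + w3 0*w2 1*w4 2*w1 3
      + w3 0*w4 1*w1 2*w2 3
      - w3 0*w4 1*w2 2*w1 3
      - w4 0*w1 1*w2 2*w3 3
      + w4 0*w1 1*w3 2*w2 3
      + w4 0*w2 1*w1 2*w3 3
      - w4 0*w2 1*w3 2*w1 3
      - w4 0*w3 1*w1 2*w2 3
      + w4 0*w3 1*w2 2*w1 3 := by
  simp [det4, Matrix.det_succ_row_zero, Fin.sum_univ_succ, Fin.succAbove]
  ring

private lemma hJd {u : ℝ → Fin 4 → ℝ} {u' : Fin 4 → ℝ} {t : ℝ}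
    (h : HasDerivAt u u' t) : HasDerivAt (fun s => Jpc (u s)) (Jpc u') t := by
  rw [hasDerivAt_pi] at h ⊢
  intro i
  fin_cases i
  · simpa [Jpc] using h 2
  · simpa [Jpc] using h 3
  · simpa [Jpc] using h 0
  · simpa [Jpc] using h 1

set_option maxHeartbeats 3200000 in
/-- If `γ₁, γ₂` are differentiable, `J ∘ γ₁ = γ₁`,
`g (x, y) = x • γ₁ y + γ₂ y` and
`f (x, y, z) = cosh z • J (g (x, y)) - sinh z • g (x, y)`, then
`det [f_x, f_y, f_z, f] = det [γ₁, γ₂', γ₂, J γ₂]`; in particular, if the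
latter determinant never vanishes then `f` is a centro-affine immersion. -/
theorem stmt_16 (γ₁ γ₂ : ℝ → Fin 4 → ℝ)
    (hd₁ : Differentiable ℝ γ₁) (hd₂ : Differentiable ℝ γ₂)
    (h₁ : ∀ y, Jpc (γ₁ y) = γ₁ y)
    (g : ℝ → ℝ → Fin 4 → ℝ) (hg : ∀ x y, g x y = x • γ₁ y + γ₂ y)
    (f : ℝ → ℝ → ℝ → Fin 4 → ℝ)
    (hf : ∀ x y z,
      f x y z = Real.cosh z • Jpc (g x y) - Real.sinh z • g x y) :
    (∀ x y z : ℝ,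
      det4 (deriv (fun t => f t y z) x) (deriv (fun t => f x t z) y)
          (deriv (fun t => f x y t) z) (f x y z) =
        det4 (γ₁ y) (deriv γ₂ y) (γ₂ y) (Jpc (γ₂ y))) ∧
    ((∀ y : ℝ, det4 (γ₁ y) (deriv γ₂ y) (γ₂ y) (Jpc (γ₂ y)) ≠ 0) →
      ∀ x y z : ℝ,
        det4 (deriv (fun t => f t y z) x) (deriv (fun t => f x t z) y)
            (deriv (fun t => f x y t) z) (f x y z) ≠ 0) := by
  have hmain : ∀ x y z : ℝ,
      det4 (deriv (fun t => f t y z) x) (deriv (fun t => f x t z) y)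
          (deriv (fun t => f x y t) z) (f x y z) =
        det4 (γ₁ y) (deriv γ₂ y) (γ₂ y) (Jpc (γ₂ y)) := by
    intro x y z
    set c := Real.cosh z with hc
    set s := Real.sinh z with hs
    have ha : HasDerivAt γ₁ (deriv γ₁ y) y := (hd₁ y).hasDerivAt
    have hb : HasDerivAt γ₂ (deriv γ₂ y) y := (hd₂ y).hasDerivAt
    -- J (γ₁') = γ₁'
    have haJ : Jpc (deriv γ₁ y) = deriv γ₁ y := by
      have h2 : HasDerivAt (fun t => Jpc (γ₁ t)) (Jpc (deriv γ₁ y)) y := hJd ha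
      simp only [h₁] at h2
      exact h2.unique ha
    -- component identities
    have e0 : γ₁ y 0 = γ₁ y 2 := by simpa [Jpc] using congrFun (h₁ y) 2
    have e1 : γ₁ y 1 = γ₁ y 3 := by simpa [Jpc] using congrFun (h₁ y) 3
    have e0' : deriv γ₁ y 0 = deriv γ₁ y 2 := by simpa [Jpc] using congrFun haJ 2
    have e1' : deriv γ₁ y 1 = deriv γ₁ y 3 := by simpa [Jpc] using congrFun haJ 3
    -- partial derivative in x
    have hC1 : HasDerivAt (fun t => f t y z) (c • γ₁ y - s • γ₁ y) x := by
      have hin : HasDerivAt (fun t : ℝ => t • γ₁ y + γ₂ y) (γ₁ y) x := by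
        simpa using ((hasDerivAt_id x).smul_const (γ₁ y)).add_const (γ₂ y)
      have := ((hJd hin).fun_const_smul c).fun_sub (hin.fun_const_smul s)
      simp only [h₁] at this
      simpa [hf, hg] using this
    -- partial derivative in y
    have hC2 : HasDerivAt (fun t => f x t z)
        (c • (x • deriv γ₁ y + Jpc (deriv γ₂ y)) - s • (x • deriv γ₁ y + deriv γ₂ y)) y := by
      have hin : HasDerivAt (fun t : ℝ => x • γ₁ t + γ₂ t)
          (x • deriv γ₁ y + deriv γ₂ y) y := (ha.const_smul x).add hb
      have hJin : HasDerivAt (fun t : ℝ => Jpc (x • γ₁ t + γ₂ t))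
          (x • deriv γ₁ y + Jpc (deriv γ₂ y)) y := by
        have h3 := hJd hin
        have hlin : Jpc (x • deriv γ₁ y + deriv γ₂ y)
            = x • deriv γ₁ y + Jpc (deriv γ₂ y) := by
          funext i
          fin_cases i <;> simp [Jpc, e0', e1']
        rwa [hlin] at h3
      have := (hJin.fun_const_smul c).fun_sub (hin.fun_const_smul s)
      simpa [hf, hg] using this
    -- partial derivative in z
    have hC3 : HasDerivAt (fun t => f x y t)
        (s • Jpc (g x y) - c • g x y) z := by
      have h1' : HasDerivAt (fun t : ℝ => Real.cosh t • Jpc (g x y))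
          (s • Jpc (g x y)) z := (Real.hasDerivAt_cosh z).smul_const _
      have h2' : HasDerivAt (fun t : ℝ => Real.sinh t • g x y)
          (c • g x y) z := (Real.hasDerivAt_sinh z).smul_const _
      simpa [hf] using (h1'.fun_sub h2')
    rw [hC1.deriv, hC2.deriv, hC3.deriv, hf x y z, hg x y]
    have hcs : c ^ 2 - s ^ 2 = 1 := Real.cosh_sq_sub_sinh_sq z
    rw [show det4 (γ₁ y) (deriv γ₂ y) (γ₂ y) (Jpc (γ₂ y))
        = (c ^ 2 - s ^ 2) ^ 2 * det4 (γ₁ y) (deriv γ₂ y) (γ₂ y) (Jpc (γ₂ y)) by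
      rw [hcs, one_pow, one_mul]]
    rw [det4_eq, det4_eq]
    simp only [Jpc, Pi.add_apply, Pi.smul_apply, Pi.sub_apply, smul_eq_mul,
      Matrix.cons_val_zero, Matrix.cons_val_one, Matrix.head_cons,
      Matrix.cons_val_two, Matrix.tail_cons, Matrix.cons_val_three]
    rw [e0, e1, e0', e1']
    ring
  exact ⟨hmain, fun hne x y z => by rw [hmain x y z]; exact hne y⟩
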